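/- For every f ∈ L²(ℝ^m), the Segal–Bargmann transform B[f] : ℂ^m → ℂ, B[f](z) = (2π)^{-m/2} ∫_{ℝ^m} exp(−z·z/2 + x·z − x·x/4) f(x) dx, is an entire function, i.e. it is complex differentiable (holomorphic) at every point of ℂ^m. -/

import Mathlib

set_option synthInstance.maxHeartbeats 1000000
set_option maxHeartbeats 1000000


open MeasureTheory

/-- The `m`-dimensional Segal–Bargmann transform of `f : ℝ^m → ℂ`:
`B[f](z) = (2π)^{-m/2} ∫_{ℝ^m} exp(-z·z/2 + x·z - x·x/4) f(x) dx`. -/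
noncomputable def segalBargmannM (m : ℕ) (f : (Fin m → ℝ) → ℂ) (z : Fin m → ℂ) : ℂ :=
  ((Real.sqrt (2 * Real.pi) ^ m : ℝ) : ℂ)⁻¹ *
    ∫ x : Fin m → ℝ,
      Complex.exp (-(∑ j, z j ^ 2) / 2 + (∑ j, (x j : ℂ) * z j) - (∑ j, (x j : ℂ) ^ 2) / 4) * f x

namespace SBaux

/-- The exponent in the Segal–Bargmann kernel. -/
noncomputable def A (m : ℕ) (z : Fin m → ℂ) (x : Fin m → ℝ) : ℂ :=
  -(∑ j, z j ^ 2) / 2 + (∑ j, (x j : ℂ) * z j) - (∑ j, (x j : ℂ) ^ 2) / 4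

/-- The derivative (in `z`) of the exponent. -/
noncomputable def L (m : ℕ) (z : Fin m → ℂ) (x : Fin m → ℝ) : (Fin m → ℂ) →L[ℂ] ℂ :=
  ∑ j, ((x j : ℂ) - z j) • (ContinuousLinearMap.proj j : (Fin m → ℂ) →L[ℂ] ℂ)

/-- The dominating weight function. -/
noncomputable def g (m : ℕ) (R : ℝ) (x : Fin m → ℝ) : ℝ :=
  ((∑ j, |x j|) + m * R + 1) *
    Real.exp (m * R ^ 2 / 2 + R * (∑ j, |x j|) - (∑ j, (x j) ^ 2) / 4)

lemma continuous_A (m : ℕ) (z : Fin m → ℂ) : Continuous (A m z) := by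
  unfold A
  fun_prop

lemma hasFDerivAt_A (m : ℕ) (x : Fin m → ℝ) (z : Fin m → ℂ) :
    HasFDerivAt (fun w => A m w x) (L m z x) z := by
  have h1 : ∀ j : Fin m, HasFDerivAt (fun w : Fin m → ℂ => w j)
      (ContinuousLinearMap.proj j : (Fin m → ℂ) →L[ℂ] ℂ) z :=
    fun j => (ContinuousLinearMap.proj j : (Fin m → ℂ) →L[ℂ] ℂ).hasFDerivAt
  have hsum : HasFDerivAt
      (fun w : Fin m → ℂ => ∑ j, ((x j : ℂ) * w j - (2⁻¹ : ℂ) * (w j * w j)))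
      (∑ j, ((x j : ℂ) • (ContinuousLinearMap.proj j : (Fin m → ℂ) →L[ℂ] ℂ) -
        (2⁻¹ : ℂ) • (z j • (ContinuousLinearMap.proj j : (Fin m → ℂ) →L[ℂ] ℂ) +
          z j • (ContinuousLinearMap.proj j : (Fin m → ℂ) →L[ℂ] ℂ)))) z := by
    apply HasFDerivAt.fun_sum
    intro j _
    exact ((h1 j).const_mul _).sub (((h1 j).mul (h1 j)).const_mul _)
  have h4 := hsum.sub_const ((∑ j, (x j : ℂ) ^ 2) / 4)
  have heq : (fun w : Fin m → ℂ => A m w x) =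
      (fun w : Fin m → ℂ =>
        (∑ j, ((x j : ℂ) * w j - (2⁻¹ : ℂ) * (w j * w j))) - (∑ j, (x j : ℂ) ^ 2) / 4) := by
    funext w
    unfold A
    rw [Finset.sum_sub_distrib, ← Finset.mul_sum]
    simp only [← sq]
    ring
  rw [heq]
  unfold L
  refine h4.congr_fderiv ?_
  refine Finset.sum_congr rfl fun j _ => ?_
  ext v
  simp only [ContinuousLinearMap.smul_apply, ContinuousLinearMap.sub_apply,
    ContinuousLinearMap.add_apply, ContinuousLinearMap.proj_apply, smul_eq_mul]
  ring

lemma re_A_le (m : ℕ) (R : ℝ) (x : Fin m → ℝ) (z : Fin m → ℂ) (hz : ‖z‖ ≤ R) :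
    (A m z x).re ≤ m * R ^ 2 / 2 + R * (∑ j, |x j|) - (∑ j, (x j) ^ 2) / 4 := by
  have hzj : ∀ j, ‖z j‖ ≤ R := fun j => (norm_le_pi_norm z j).trans hz
  unfold A
  simp only [Complex.add_re, Complex.sub_re, Complex.neg_re, Complex.div_re, Complex.re_sum,
    Complex.neg_im, Complex.div_im, Complex.im_sum, Complex.normSq, Complex.re_ofNat,
    Complex.im_ofNat, Complex.mul_re, Complex.mul_im, Complex.ofReal_re, Complex.ofReal_im,
    MonoidWithZeroHom.coe_mk, ZeroHom.coe_mk]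
  ring_nf
  have key1 : ∑ j : Fin m, ((z j ^ 2).re) * (-2⁻¹ : ℝ) ≤ ∑ _j : Fin m, R ^ 2 / 2 := by
    apply Finset.sum_le_sum
    intro j _
    have h1 : (z j ^ 2).re = (z j).re ^ 2 - (z j).im ^ 2 := by
      simp [sq, Complex.mul_re]
    have h2 : (z j).re ^ 2 + (z j).im ^ 2 ≤ R ^ 2 := by
      have h3 := Complex.sq_norm (z j)
      rw [Complex.normSq_apply] at h3
      nlinarith [hzj j, norm_nonneg (z j)]
    nlinarith
  have key2 : ∑ j : Fin m, x j * (z j).re ≤ ∑ j : Fin m, |x j| * R := by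
    apply Finset.sum_le_sum
    intro j _
    have h2 : |(z j).re| ≤ R := (Complex.abs_re_le_norm _).trans (hzj j)
    calc x j * (z j).re ≤ |x j * (z j).re| := le_abs_self _
      _ = |x j| * |(z j).re| := abs_mul _ _
      _ ≤ |x j| * R := by nlinarith [abs_nonneg (x j)]
  ring_nf at key1 key2 ⊢
  simp only [← Complex.ofReal_pow, Complex.ofReal_re]
  have k1 : (∑ j : Fin m, (z j ^ 2).re) * (-1/2) ≤ R ^ 2 * m * (1/2) := by
    rw [Finset.sum_mul]
    refine key1.trans_eq ?_
    rw [Finset.sum_const, Finset.card_univ]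
    simp
    ring
  have k2 : ∑ j : Fin m, x j * (z j).re ≤ R * ∑ j : Fin m, |x j| := by
    refine key2.trans_eq ?_
    rw [Finset.mul_sum]
  linarith

lemma norm_L_le (m : ℕ) (R : ℝ) (x : Fin m → ℝ) (z : Fin m → ℂ) (hz : ‖z‖ ≤ R) :
    ‖L m z x‖ ≤ (∑ j, |x j|) + m * R := by
  have hzj : ∀ j, ‖z j‖ ≤ R := fun j => (norm_le_pi_norm z j).trans hz
  have hR : 0 ≤ R := le_trans (norm_nonneg z) hz
  have h0 : 0 ≤ (∑ j, |x j|) + m * R := by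
    have : (0:ℝ) ≤ ∑ j, |x j| := Finset.sum_nonneg fun j _ => abs_nonneg _
    positivity
  refine ContinuousLinearMap.opNorm_le_bound _ h0 fun v => ?_
  have happ : L m z x v = ∑ j, ((x j : ℂ) - z j) * v j := by
    unfold L
    simp [ContinuousLinearMap.sum_apply]
  rw [happ]
  calc ‖∑ j, ((x j : ℂ) - z j) * v j‖ ≤ ∑ j, ‖((x j : ℂ) - z j) * v j‖ :=
        norm_sum_le _ _
    _ ≤ ∑ j, (|x j| + R) * ‖v‖ := by
        apply Finset.sum_le_sum
        intro j _
        rw [norm_mul]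
        have h1 : ‖((x j : ℂ) - z j)‖ ≤ |x j| + R := by
          calc ‖((x j : ℂ) - z j)‖ ≤ ‖(x j : ℂ)‖ + ‖z j‖ := norm_sub_le _ _
            _ ≤ |x j| + R := by
                rw [Complex.norm_real, Real.norm_eq_abs]
                exact add_le_add le_rfl (hzj j)
        have h2 : ‖v j‖ ≤ ‖v‖ := norm_le_pi_norm v j
        have := mul_le_mul h1 h2 (norm_nonneg _) (by positivity)
        exact this
    _ = ((∑ j, |x j|) + m * R) * ‖v‖ := by
        rw [← Finset.sum_mul, Finset.sum_add_distrib, Finset.sum_const, Finset.card_univ]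
        simp [Fintype.card_fin, nsmul_eq_mul]

lemma norm_csmul_le {m : ℕ} (c : ℂ) (T : (Fin m → ℂ) →L[ℂ] ℂ) : ‖c • T‖ ≤ ‖c‖ * ‖T‖ := by
  refine ContinuousLinearMap.opNorm_le_bound _ (by positivity) fun v => ?_
  rw [ContinuousLinearMap.smul_apply, norm_smul]
  calc ‖c‖ * ‖T v‖ ≤ ‖c‖ * (‖T‖ * ‖v‖) := by
        gcongr
        exact T.le_opNorm v
    _ = ‖c‖ * ‖T‖ * ‖v‖ := by ring

lemma g_nonneg (m : ℕ) (R : ℝ) (hR : 0 ≤ R) (x : Fin m → ℝ) : 0 ≤ g m R x := by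
  unfold g
  have : (0:ℝ) ≤ ∑ j, |x j| := Finset.sum_nonneg fun j _ => abs_nonneg _
  positivity

lemma continuous_g (m : ℕ) (R : ℝ) : Continuous (g m R) := by
  unfold g
  fun_prop

lemma integrable_gauss (m : ℕ) :
    Integrable (fun x : Fin m → ℝ => Real.exp (-(∑ j, (x j) ^ 2) / 4)) volume := by
  have h : (fun x : Fin m → ℝ => Real.exp (-(∑ j, (x j) ^ 2) / 4)) =
      fun x : Fin m → ℝ => ∏ j, Real.exp (-(4⁻¹ : ℝ) * (x j) ^ 2) := by
    funext x
    rw [← Real.exp_sum]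
    congr 1
    rw [neg_div, Finset.sum_div, ← Finset.sum_neg_distrib]
    exact Finset.sum_congr rfl fun j _ => by ring
  rw [h]
  exact Integrable.fintype_prod (fun j => integrable_exp_neg_mul_sq (by norm_num))

lemma sq_le_four_exp (u : ℝ) (hu : 0 ≤ u) : u ^ 2 ≤ 4 * Real.exp u := by
  have h := Real.add_one_le_exp (u / 2)
  have h2 : Real.exp u = Real.exp (u / 2) ^ 2 := by
    rw [← Real.exp_nat_mul (u/2) 2]; push_cast; ring_nf
  nlinarith [Real.exp_pos (u/2)]

lemma g_sq_le (m : ℕ) (R : ℝ) (hR : 0 ≤ R) (x : Fin m → ℝ) :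
    g m R x ^ 2 ≤ (4 * Real.exp (m*R + 1 + m*R^2 + m*(2*R+1)^2)) *
      Real.exp (-(∑ j, (x j) ^ 2) / 4) := by
  set t := ∑ j, |x j| with ht
  set s := ∑ j, (x j) ^ 2 with hs
  have ht0 : 0 ≤ t := Finset.sum_nonneg fun j _ => abs_nonneg _
  have h1 : (t + m*R + 1) ^ 2 ≤ 4 * Real.exp (t + m*R + 1) :=
    sq_le_four_exp _ (by positivity)
  have h2 : (2*R+1)*t - s/4 ≤ m*(2*R+1)^2 := by
    have hterm : ∀ j : Fin m, (2*R+1) * |x j| - (x j)^2/4 ≤ (2*R+1)^2 := fun j => by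
      nlinarith [sq_nonneg (|x j|/2 - (2*R+1)), abs_nonneg (x j), sq_abs (x j)]
    calc (2*R+1)*t - s/4 = ∑ j : Fin m, ((2*R+1) * |x j| - (x j)^2/4) := by
          rw [Finset.sum_sub_distrib, ← Finset.mul_sum, ← Finset.sum_div]
      _ ≤ ∑ _j : Fin m, (2*R+1)^2 := Finset.sum_le_sum fun j _ => hterm j
      _ = m*(2*R+1)^2 := by
          rw [Finset.sum_const, Finset.card_univ]
          simp [nsmul_eq_mul]
  have hexp2 : Real.exp (m * R ^ 2 / 2 + R * t - s / 4) ^ 2 =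
      Real.exp (m * R ^ 2 + 2 * R * t - s / 2) := by
    rw [← Real.exp_nat_mul]
    push_cast
    ring_nf
  calc g m R x ^ 2 = (t + m*R + 1) ^ 2 * Real.exp (m * R ^ 2 / 2 + R * t - s / 4) ^ 2 := by
        unfold g; rw [mul_pow]
    _ ≤ 4 * Real.exp (t + m*R + 1) * Real.exp (m * R ^ 2 + 2 * R * t - s / 2) := by
        rw [hexp2]
        exact mul_le_mul_of_nonneg_right h1 (Real.exp_pos _).le
    _ = 4 * Real.exp ((m*R + 1 + m*R^2 + ((2*R+1)*t - s/4)) + -s/4) := by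
        rw [mul_assoc, ← Real.exp_add]
        try ring_nf
    _ ≤ 4 * Real.exp ((m*R + 1 + m*R^2 + m*(2*R+1)^2) + -s/4) := by
        gcongr
    _ = (4 * Real.exp (m*R + 1 + m*R^2 + m*(2*R+1)^2)) * Real.exp (-s / 4) := by
        rw [mul_assoc, ← Real.exp_add]
        try ring_nf

lemma memℒp_g (m : ℕ) (R : ℝ) (hR : 0 ≤ R) : MemLp (g m R) 2 (volume : Measure (Fin m → ℝ)) := by
  rw [memLp_two_iff_integrable_sq (continuous_g m R).aestronglyMeasurable]
  apply Integrable.mono' ((integrable_gauss m).const_mul (4 * Real.exp (m*R + 1 + m*R^2 + m*(2*R+1)^2)))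
  · exact ((continuous_g m R).pow 2).aestronglyMeasurable
  · filter_upwards with x
    rw [Real.norm_eq_abs, abs_of_nonneg (sq_nonneg _)]
    exact g_sq_le m R hR x

end SBaux

section
open SBaux

/-- For `f ∈ L²(ℝ^m)`, the Segal–Bargmann transform `B[f] : ℂ^m → ℂ` is an entire function,
i.e. it is complex differentiable at every point of `ℂ^m`. -/
theorem segalBargmannM_entire (m : ℕ) (f : (Fin m → ℝ) → ℂ) (hf : MemLp f 2 volume) :
    Differentiable ℂ (segalBargmannM m f) := by
  intro z₀
  set R : ℝ := ‖z₀‖ + 1 with hRdef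
  have hR0 : 0 ≤ R := by positivity
  have hR1 : 1 ≤ R := le_add_of_nonneg_left (norm_nonneg _)
  set bound : (Fin m → ℝ) → ℝ := fun x => g m R x * ‖f x‖ with hbdef
  have hbound_int : Integrable bound volume := by
    have h1 : MemLp (g m R) 2 (volume : Measure (Fin m → ℝ)) := memℒp_g m R hR0
    have h2 : MemLp (fun x => ‖f x‖) 2 (volume : Measure (Fin m → ℝ)) := hf.norm
    have h3 : MemLp (g m R • fun x => ‖f x‖) 1 (volume : Measure (Fin m → ℝ)) :=
      h2.smul h1
    rw [memLp_one_iff_integrable] at h3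
    exact h3
  -- bound on the exponential factor
  have hexp_le : ∀ (z : Fin m → ℂ), ‖z‖ ≤ R → ∀ x : Fin m → ℝ,
      ‖Complex.exp (A m z x)‖ ≤
        Real.exp (m * R ^ 2 / 2 + R * (∑ j, |x j|) - (∑ j, (x j) ^ 2) / 4) := by
    intro z hz x
    rw [Complex.norm_exp]
    exact Real.exp_le_exp.2 (re_A_le m R x z hz)
  have hfactor : ∀ x : Fin m → ℝ,
      Real.exp (m * R ^ 2 / 2 + R * (∑ j, |x j|) - (∑ j, (x j) ^ 2) / 4) ≤ g m R x := by
    intro x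
    unfold g
    have h1 : (0:ℝ) ≤ ∑ j, |x j| := Finset.sum_nonneg fun j _ => abs_nonneg _
    have h2 : (0:ℝ) ≤ (m:ℝ) * R := by positivity
    have h3 := mul_nonneg (add_nonneg h1 h2)
      (Real.exp_pos (m * R ^ 2 / 2 + R * (∑ j, |x j|) - (∑ j, (x j) ^ 2) / 4)).le
    nlinarith [h3]
  have key : HasFDerivAt
      (fun z : Fin m → ℂ => ∫ x : Fin m → ℝ, Complex.exp (A m z x) * f x)
      (∫ x : Fin m → ℝ, (Complex.exp (A m z₀ x) * f x) • L m z₀ x) z₀ := by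
    apply hasFDerivAt_integral_of_dominated_of_fderiv_le (𝕜 := ℂ) (bound := bound)
      (F' := fun z x => (Complex.exp (A m z x) * f x) • L m z x) (Metric.ball_mem_nhds z₀ one_pos)
    · filter_upwards with z
      exact ((Complex.continuous_exp.comp (continuous_A m z)).aestronglyMeasurable.mul hf.1)
    · -- integrability at z₀
      apply Integrable.mono' hbound_int
        ((Complex.continuous_exp.comp (continuous_A m z₀)).aestronglyMeasurable.mul hf.1)
      filter_upwards with x
      simp only [Pi.mul_apply, Function.comp_apply]
      rw [norm_mul]
      have hz₀ : ‖z₀‖ ≤ R := by rw [hRdef]; linarith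
      have := (hexp_le z₀ hz₀ x).trans (hfactor x)
      calc ‖Complex.exp (A m z₀ x)‖ * ‖f x‖ ≤ g m R x * ‖f x‖ :=
            mul_le_mul_of_nonneg_right this (norm_nonneg _)
        _ = bound x := rfl
    · -- measurability of F' z₀
      have heq : (fun x => (Complex.exp (A m z₀ x) * f x) • L m z₀ x) =
          (fun x => f x • (Complex.exp (A m z₀ x) • L m z₀ x)) := by
        funext x
        rw [smul_smul, mul_comm]
      rw [heq]
      apply hf.1.smul
      apply Continuous.aestronglyMeasurable
      apply Continuous.smul (Complex.continuous_exp.comp (continuous_A m z₀))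
      unfold L
      exact continuous_finset_sum _ fun j _ =>
        ((Complex.continuous_ofReal.comp (continuous_apply j)).sub continuous_const).smul
          continuous_const
    · -- norm bound on the ball
      filter_upwards with x z hz
      have hzR : ‖z‖ ≤ R := by
        have h1 : ‖z - z₀‖ < 1 := by
          rw [← dist_eq_norm]; exact Metric.mem_ball.1 hz
        calc ‖z‖ = ‖z₀ + (z - z₀)‖ := by ring_nf
          _ ≤ ‖z₀‖ + ‖z - z₀‖ := norm_add_le _ _
          _ ≤ R := by rw [hRdef]; linarith
      refine le_trans (norm_csmul_le _ _) ?_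
      rw [norm_mul]
      have h1 := hexp_le z hzR x
      have h2 := norm_L_le m R x z hzR
      have ht0 : (0:ℝ) ≤ ∑ j, |x j| := Finset.sum_nonneg fun j _ => abs_nonneg _
      have hexp0 := (Real.exp_pos (m * R ^ 2 / 2 + R * (∑ j, |x j|) - (∑ j, (x j) ^ 2) / 4)).le
      calc ‖Complex.exp (A m z x)‖ * ‖f x‖ * ‖L m z x‖
          ≤ (Real.exp (m * R ^ 2 / 2 + R * (∑ j, |x j|) - (∑ j, (x j) ^ 2) / 4) * ‖f x‖) *
            ((∑ j, |x j|) + m * R) := by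
            apply mul_le_mul
            · exact mul_le_mul_of_nonneg_right h1 (norm_nonneg _)
            · exact h2
            · exact norm_nonneg _
            · positivity
        _ ≤ g m R x * ‖f x‖ := by
            unfold g
            have := norm_nonneg (f x)
            nlinarith [Real.exp_pos (m * R ^ 2 / 2 + R * (∑ j, |x j|) - (∑ j, (x j) ^ 2) / 4)]
        _ = bound x := rfl
    · exact hbound_int
    · -- differentiability
      filter_upwards with x z _
      have hd := ((hasFDerivAt_A m x z).cexp).mul_const (f x)
      refine hd.congr_fderiv ?_
      ext v
      simp only [ContinuousLinearMap.smul_apply, ContinuousLinearMap.smulRight_apply,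
        ContinuousLinearMap.coe_smul', Pi.smul_apply, smul_eq_mul]
      ring
  have hdiff : DifferentiableAt ℂ
      (fun z : Fin m → ℂ => ∫ x : Fin m → ℝ, Complex.exp (A m z x) * f x) z₀ :=
    key.differentiableAt
  have : segalBargmannM m f = fun z =>
      ((Real.sqrt (2 * Real.pi) ^ m : ℝ) : ℂ)⁻¹ *
        ∫ x : Fin m → ℝ, Complex.exp (A m z x) * f x := rfl
  rw [this]
  exact hdiff.const_mul _

end
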